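/- For every real parameter a, the integral of z·R(U(z)) over z ∈ ℝ equals −1/2. -/

import Mathlib

open Real MeasureTheory

/-- The bistable reaction term `R(u) = u(1-u)(u-a)`. -/
noncomputable def R (a u : ℝ) : ℝ := u * (1 - u) * (u - a)

/-- The kink profile `U(z) = 1/(1+exp z)`. -/
noncomputable def U (z : ℝ) : ℝ := 1 / (1 + Real.exp z)

open Filter Set Asymptotics Topology

lemma one_add_exp_pos (z : ℝ) : 0 < 1 + Real.exp z := by positivity

lemma hasDerivAt_U (z : ℝ) : HasDerivAt U (U z ^ 2 - U z) z := by
  have h : HasDerivAt (fun z : ℝ => 1 + Real.exp z) (Real.exp z) z :=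
    (Real.hasDerivAt_exp z).const_add 1
  have h2 := h.inv (ne_of_gt (one_add_exp_pos z))
  have h3 : HasDerivAt (fun z : ℝ => U z) (-Real.exp z / (1 + Real.exp z) ^ 2) z := by
    simpa [U, one_div, Pi.inv_def] using h2
  convert h3 using 1
  have hz := (one_add_exp_pos z).ne'
  simp only [U]; field_simp
  ring


noncomputable def G (a z : ℝ) : ℝ :=
  -z * ((U z) ^ 2 / 2 - a * U z) + (1 / 2) * (z - Real.log (1 + Real.exp z) + U z)
    - a * (z - Real.log (1 + Real.exp z))

lemma hasDerivAt_G (a z : ℝ) : HasDerivAt (G a) (z * R a (U z)) z := by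
  have hne := (one_add_exp_pos z).ne'
  have hU := hasDerivAt_U z
  have hlog : HasDerivAt (fun z : ℝ => Real.log (1 + Real.exp z))
      (Real.exp z / (1 + Real.exp z)) z :=
    ((Real.hasDerivAt_exp z).const_add 1).log hne
  have h1 : HasDerivAt (fun z : ℝ => -z * ((U z) ^ 2 / 2 - a * U z))
      (-1 * ((U z) ^ 2 / 2 - a * U z) +
        -z * ((2 * U z ^ 1 * (U z ^ 2 - U z)) / 2 - a * (U z ^ 2 - U z))) z :=
    ((hasDerivAt_id z).neg).mul (((hU.pow 2).div_const 2).sub (hU.const_mul a))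
  have h2 : HasDerivAt (fun z : ℝ => (1 / 2 : ℝ) * (z - Real.log (1 + Real.exp z) + U z))
      ((1 / 2 : ℝ) * (1 - Real.exp z / (1 + Real.exp z) + (U z ^ 2 - U z))) z :=
    (((hasDerivAt_id z).sub hlog).add hU).const_mul _
  have h3 : HasDerivAt (fun z : ℝ => a * (z - Real.log (1 + Real.exp z)))
      (a * (1 - Real.exp z / (1 + Real.exp z))) z :=
    ((hasDerivAt_id z).sub hlog).const_mul _
  have h := (h1.add h2).sub h3
  convert h using 1
  have hU1 : U z * (1 + Real.exp z) = 1 := by simp only [U]; field_simp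
  · rfl
  · rfl
  · rfl
  simp only [R, U]; field_simp
  ring

lemma tendsto_U_atTop : Tendsto U atTop (𝓝 0) := by
  have h : Tendsto (fun z : ℝ => 1 + Real.exp z) atTop atTop :=
    tendsto_atTop_add_const_left _ _ Real.tendsto_exp_atTop
  exact h.inv_tendsto_atTop.congr fun z => by simp [U, one_div]

lemma tendsto_U_atBot : Tendsto U atBot (𝓝 1) := by
  have h : Tendsto (fun z : ℝ => 1 + Real.exp z) atBot (𝓝 1) := by
    simpa using tendsto_const_nhds.add Real.tendsto_exp_atBot
  have h2 := h.inv₀ (by norm_num)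
  rw [show ((1:ℝ))⁻¹ = 1 by norm_num] at h2
  exact h2.congr fun z => by simp [U, one_div]

lemma tendsto_mul_exp_neg : Tendsto (fun z : ℝ => z * Real.exp (-z)) atTop (𝓝 0) := by
  simpa using Real.tendsto_pow_mul_exp_neg_atTop_nhds_zero 1

lemma tendsto_mul_exp_atBot : Tendsto (fun z : ℝ => z * Real.exp z) atBot (𝓝 0) := by
  have h := (tendsto_mul_exp_neg.comp tendsto_neg_atBot_atTop).neg
  simpa [Function.comp] using h

lemma tendsto_zU_atTop : Tendsto (fun z : ℝ => z * U z) atTop (𝓝 0) := by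
  have h2 : Tendsto (fun z : ℝ => 1 - U z) atTop (𝓝 1) := by
    simpa using tendsto_const_nhds.sub tendsto_U_atTop
  have h := tendsto_mul_exp_neg.mul h2
  rw [show (0:ℝ) * 1 = 0 by ring] at h
  refine h.congr fun z => ?_
  have hne := (one_add_exp_pos z).ne'
  rw [Real.exp_neg]
  simp only [U]; field_simp; ring

lemma tendsto_z1U_atBot : Tendsto (fun z : ℝ => z * (1 - U z)) atBot (𝓝 0) := by
  have h := tendsto_mul_exp_atBot.mul tendsto_U_atBot
  rw [show (0:ℝ) * 1 = 0 by ring] at h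
  refine h.congr fun z => ?_
  have hne := (one_add_exp_pos z).ne'
  simp only [U]; field_simp; ring

lemma log_id_sub (z : ℝ) : z - Real.log (1 + Real.exp z) = -Real.log (1 + Real.exp (-z)) := by
  have h : 1 + Real.exp (-z) = (1 + Real.exp z) / Real.exp z := by
    rw [Real.exp_neg]; field_simp; ring
  rw [h, Real.log_div (one_add_exp_pos z).ne' (Real.exp_ne_zero z), Real.log_exp]
  ring

lemma tendsto_logterm_atTop :
    Tendsto (fun z : ℝ => z - Real.log (1 + Real.exp z)) atTop (𝓝 0) := by
  have h1 : Tendsto (fun z : ℝ => 1 + Real.exp (-z)) atTop (𝓝 1) := by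
    simpa using tendsto_const_nhds.add Real.tendsto_exp_neg_atTop_nhds_zero
  have h2 := ((Real.continuousAt_log (by norm_num : (1:ℝ) ≠ 0)).tendsto.comp h1).neg
  simp only [Real.log_one, neg_zero] at h2
  exact h2.congr fun z => (log_id_sub z).symm

lemma tendsto_log_atBot :
    Tendsto (fun z : ℝ => Real.log (1 + Real.exp z)) atBot (𝓝 0) := by
  have h1 : Tendsto (fun z : ℝ => 1 + Real.exp z) atBot (𝓝 1) := by
    simpa using tendsto_const_nhds.add Real.tendsto_exp_atBot
  have h2 := (Real.continuousAt_log (by norm_num : (1:ℝ) ≠ 0)).tendsto.comp h1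
  simpa [Function.comp_def] using h2

lemma tendsto_G_atTop (a : ℝ) : Tendsto (G a) atTop (𝓝 0) := by
  have h : Tendsto (fun z : ℝ =>
      -((z * U z) * (U z / 2)) + a * (z * U z)
        + (1 / 2 - a) * (z - Real.log (1 + Real.exp z)) + (1 / 2) * U z) atTop
      (𝓝 (-((0 : ℝ) * (0 / 2)) + a * 0 + (1 / 2 - a) * 0 + (1 / 2) * 0)) := by
    exact (((tendsto_zU_atTop.mul (tendsto_U_atTop.div_const 2)).neg.add
      (tendsto_zU_atTop.const_mul a)).add
      (tendsto_logterm_atTop.const_mul _)).add (tendsto_U_atTop.const_mul _)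
  rw [show -((0 : ℝ) * (0 / 2)) + a * 0 + (1 / 2 - a) * 0 + (1 / 2) * 0 = 0 by ring] at h
  exact h.congr fun z => by unfold G; ring

lemma tendsto_G_atBot (a : ℝ) : Tendsto (G a) atBot (𝓝 (1 / 2)) := by
  have h : Tendsto (fun z : ℝ =>
      (z * (1 - U z)) * ((1 + U z) / 2) - a * (z * (1 - U z))
        + (a - 1 / 2) * Real.log (1 + Real.exp z) + U z / 2) atBot
      (𝓝 ((0 : ℝ) * ((1 + 1) / 2) - a * 0 + (a - 1 / 2) * 0 + 1 / 2)) := by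
    exact (((tendsto_z1U_atBot.mul
      ((tendsto_const_nhds.add tendsto_U_atBot).div_const 2)).sub
      (tendsto_z1U_atBot.const_mul a)).add
      (tendsto_log_atBot.const_mul _)).add (tendsto_U_atBot.div_const 2)
  rw [show (0 : ℝ) * ((1 + 1) / 2) - a * 0 + (a - 1 / 2) * 0 + 1 / 2 = 1 / 2 by ring] at h
  exact h.congr fun z => by unfold G; ring

lemma continuous_integrand (a : ℝ) : Continuous (fun z : ℝ => z * R a (U z)) := by
  have hU : Continuous U :=
    continuous_const.div (continuous_const.add Real.continuous_exp)
      fun z => (one_add_exp_pos z).ne'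
  unfold R
  exact continuous_id.mul (((hU.mul (continuous_const.sub hU)).mul (hU.sub continuous_const)))

lemma abs_bound (a z : ℝ) :
    |z * R a (U z)| ≤ 2 * (1 + |a|) * Real.exp (-(1/2) * |z|) := by
  have hE : 0 < Real.exp z := Real.exp_pos z
  have hne := (one_add_exp_pos z).ne'
  have hU0 : 0 < U z := by rw [U]; positivity
  have hU1 : U z < 1 := by
    rw [U, div_lt_one (one_add_exp_pos z)]; linarith
  have hprod : U z * (1 - U z) ≤ Real.exp (-|z|) := by
    have heq : U z * (1 - U z) = Real.exp z / (1 + Real.exp z) ^ 2 := by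
      simp only [U]; field_simp; ring
    rw [heq]
    rcases le_or_gt 0 z with hz | hz
    · rw [abs_of_nonneg hz, Real.exp_neg, div_le_iff₀ (by positivity)]
      have hinv : (Real.exp z)⁻¹ * Real.exp z = 1 := inv_mul_cancel₀ hE.ne'
      nlinarith [inv_pos.mpr hE]
    · rw [abs_of_neg hz, neg_neg, div_le_iff₀ (by positivity)]
      nlinarith [mul_pos hE hE, mul_pos (mul_pos hE hE) hE]
  have habs : |U z - a| ≤ 1 + |a| := by
    have h := abs_add_le (U z) (-a)
    rw [abs_neg] at h
    rw [sub_eq_add_neg]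
    have : |U z| ≤ 1 := by rw [abs_of_pos hU0]; linarith
    linarith
  have hz2 : |z| ≤ 2 * Real.exp ((1/2) * |z|) := by
    have h := Real.add_one_le_exp ((1/2) * |z|)
    linarith
  have h1 : |R a (U z)| = (U z * (1 - U z)) * |U z - a| := by
    rw [R, abs_mul, abs_of_nonneg (by nlinarith : (0:ℝ) ≤ U z * (1 - U z))]
  calc |z * R a (U z)| = |z| * (U z * (1 - U z)) * |U z - a| := by
        rw [abs_mul, h1]; ring
    _ ≤ |z| * Real.exp (-|z|) * (1 + |a|) := by
        have ha : (0:ℝ) ≤ 1 + |a| := by positivity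
        exact mul_le_mul (mul_le_mul_of_nonneg_left hprod (abs_nonneg z)) habs
          (abs_nonneg _) (by positivity)
    _ ≤ (2 * Real.exp ((1/2) * |z|)) * Real.exp (-|z|) * (1 + |a|) := by
        exact mul_le_mul_of_nonneg_right
          (mul_le_mul_of_nonneg_right hz2 (Real.exp_pos _).le) (by positivity)
    _ = 2 * (1 + |a|) * Real.exp (-(1/2) * |z|) := by
        rw [show (-(1/2 : ℝ)) * |z| = (1/2) * |z| + (-|z|) by ring, Real.exp_add]
        ring

lemma integrable_integrand (a : ℝ) : Integrable (fun z : ℝ => z * R a (U z)) := by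
  have hIic : IntegrableOn (fun x : ℝ => Real.exp ((1/2) * x)) (Iic (0:ℝ)) := by
    have h1 : IntegrableOn (fun x : ℝ => Real.exp (-(1/2) * x)) (Ici (0:ℝ)) :=
      (integrableOn_Ici_iff_integrableOn_Ioi).mpr (exp_neg_integrableOn_Ioi 0 (by norm_num))
    rw [← (Measure.measurePreserving_neg (volume : Measure ℝ)).integrableOn_comp_preimage
        (Homeomorph.neg ℝ).measurableEmbedding]
    simpa [Function.comp_def, neg_Iic, mul_comm] using h1
  refine (continuous_integrand a).locallyIntegrable.integrable_of_isBigO_atBot_atTop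
    (g := fun x : ℝ => Real.exp ((1/2) * x)) ?_ ⟨Iic 0, Iic_mem_atBot 0, hIic⟩
    (g' := fun x : ℝ => Real.exp (-(1/2) * x)) ?_
    ⟨Ioi 0, Ioi_mem_atTop 0, exp_neg_integrableOn_Ioi 0 (by norm_num)⟩
  · rw [isBigO_iff]
    refine ⟨2 * (1 + |a|), ?_⟩
    filter_upwards [eventually_le_atBot (0:ℝ)] with z hz
    have h := abs_bound a z
    rw [abs_of_nonpos hz, show (-(1/2:ℝ)) * -z = (1/2) * z by ring] at h
    rw [Real.norm_eq_abs, Real.norm_eq_abs, abs_of_pos (Real.exp_pos _)]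
    exact h
  · rw [isBigO_iff]
    refine ⟨2 * (1 + |a|), ?_⟩
    filter_upwards [eventually_ge_atTop (0:ℝ)] with z hz
    have h := abs_bound a z
    rw [abs_of_nonneg hz] at h
    rw [Real.norm_eq_abs, Real.norm_eq_abs, abs_of_pos (Real.exp_pos _)]
    exact h

/-- For every real parameter `a`, the integral of `z·R(U(z))` over `z ∈ ℝ` equals `−1/2`. -/
theorem integral_z_mul_R_kink (a : ℝ) :
    ∫ z : ℝ, z * R a (U z) = -(1 / 2) := by
  have key := integral_of_hasDerivAt_of_tendsto (hasDerivAt_G a) (integrable_integrand a)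
    (tendsto_G_atBot a) (tendsto_G_atTop a)
  rw [key]; norm_num
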